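/- Let X be a topological space, E a finite-dimensional real normed vector space, and F : X → Set E a set-valued map each of whose values F x is convex. If F is lower semicontinuous, then for every x ∈ X and every compact set K ⊆ interior (F x) there exists a neighborhood N of x such that K ⊆ interior (F w) for every w ∈ N. Conversely, if every value F x is closed with interior (F x) nonempty, and for every x and every compact K ⊆ interior (F x) there is a neighborhood N of x with K ⊆ interior (F w) for all w ∈ N, then F is lower semicontinuous. -/

import Mathlib

open Set Metric

/-- Lower semicontinuity of a set-valued map. -/
def LowerSemicontinuousSetMap {X E : Type*} [TopologicalSpace X] [TopologicalSpace E]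
    (F : X → Set E) : Prop :=
  ∀ x : X, ∀ V : Set E, IsOpen V → (F x ∩ V).Nonempty →
    {w : X | (F w ∩ V).Nonempty} ∈ nhds x

/-- Stability of convex hulls of finite families under small perturbations: if the ball
`ball k (2ρ)` lies in the convex hull of the points `v i` and each `y i` is within `ρ/2` of
`v i`, then `ball k ρ` lies in the convex hull of the `y i`. -/
lemma hull_stability {E : Type*} [NormedAddCommGroup E] [NormedSpace ℝ E]
    {ι : Type*} [Finite ι] [Nonempty ι] (v y : ι → E) (k : E) (ρ : ℝ) (hρ : 0 < ρ)
    (hball : ball k (2 * ρ) ⊆ convexHull ℝ (Set.range v))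
    (hy : ∀ i, ‖y i - v i‖ < ρ / 2) :
    ball k ρ ⊆ convexHull ℝ (Set.range y) := by
  intro u hu
  by_contra hu'
  have hcl : IsClosed (convexHull ℝ (Set.range y)) :=
    ((Set.finite_range y).isCompact_convexHull (𝕜 := ℝ)).isClosed
  obtain ⟨f, u₀, hf1, hf2⟩ :=
    geometric_hahn_banach_closed_point (convex_convexHull ℝ _) hcl hu'
  -- every point of the hull of `v` satisfies `f z ≤ u₀ + (ρ/2) * ‖f‖`
  have hbound : ∀ z ∈ convexHull ℝ (Set.range v), f z ≤ u₀ + ρ / 2 * ‖f‖ := by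
    intro z hz
    have hhalf : Convex ℝ {z : E | f z ≤ u₀ + ρ / 2 * ‖f‖} :=
      convex_halfSpace_le ⟨f.map_add, f.map_smul⟩ _
    refine convexHull_min ?_ hhalf hz
    rintro _ ⟨i, rfl⟩
    have h1 : f (y i) < u₀ := hf1 _ (subset_convexHull ℝ _ (Set.mem_range_self i))
    have h2 : f (v i - y i) ≤ ‖f‖ * ‖v i - y i‖ :=
      (le_abs_self _).trans (f.le_opNorm _)
    have h3 : ‖f‖ * ‖v i - y i‖ ≤ ‖f‖ * (ρ / 2) := by
      apply mul_le_mul_of_nonneg_left _ (norm_nonneg f)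
      rw [norm_sub_rev]
      exact (hy i).le
    have h4 : f (v i) = f (y i) + f (v i - y i) := by
      rw [← map_add]; congr 1; abel
    simp only [Set.mem_setOf_eq]
    nlinarith
  -- hence `f w ≤ ‖f‖/2` for all unit vectors `w`
  have hsmall : ∀ w : E, ‖w‖ ≤ 1 → f w ≤ ‖f‖ / 2 := by
    intro w hw
    have hz : u + ρ • w ∈ ball k (2 * ρ) := by
      have h1 : ‖u + ρ • w - k‖ ≤ ‖u - k‖ + ρ * ‖w‖ := by
        calc ‖u + ρ • w - k‖ = ‖(u - k) + ρ • w‖ := by congr 1; abel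
          _ ≤ ‖u - k‖ + ‖ρ • w‖ := norm_add_le _ _
          _ = ‖u - k‖ + ρ * ‖w‖ := by rw [norm_smul, Real.norm_of_nonneg hρ.le]
      have h2 : ‖u - k‖ < ρ := by rw [← dist_eq_norm]; exact hu
      have h3 : ρ * ‖w‖ ≤ ρ := by nlinarith
      rw [mem_ball, dist_eq_norm]
      nlinarith
    have h5 := hbound _ (hball hz)
    have h6 : f (u + ρ • w) = f u + ρ * f w := by
      rw [map_add, map_smul]; rfl
    nlinarith
  -- so `‖f‖ ≤ ‖f‖/2`, i.e. `f = 0`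
  have hopn : ‖f‖ ≤ ‖f‖ / 2 := by
    apply ContinuousLinearMap.opNorm_le_bound _ (by positivity)
    intro z
    rcases eq_or_ne z 0 with rfl | hz0
    · simp
    · have hnz : (0:ℝ) < ‖z‖ := norm_pos_iff.2 hz0
      have hw : ‖(‖z‖⁻¹ • z : E)‖ ≤ 1 := by
        rw [norm_smul, Real.norm_of_nonneg (by positivity)]
        rw [inv_mul_cancel₀ hnz.ne']
      have hwneg : ‖(-(‖z‖⁻¹ • z) : E)‖ ≤ 1 := by rwa [norm_neg]
      have ha := hsmall _ hw
      have hb := hsmall _ hwneg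
      rw [map_neg] at hb
      have habs : |f (‖z‖⁻¹ • z)| ≤ ‖f‖ / 2 := abs_le.2 ⟨by linarith, ha⟩
      have hfz : f z = ‖z‖ * f (‖z‖⁻¹ • z) := by
        rw [map_smul, smul_eq_mul, ← mul_assoc, mul_inv_cancel₀ hnz.ne', one_mul]
      rw [Real.norm_eq_abs, hfz, abs_mul, abs_of_nonneg hnz.le, mul_comm]
      exact mul_le_mul_of_nonneg_right habs hnz.le
  have hf0 : f = 0 := by
    have : ‖f‖ ≤ 0 := by linarith
    exact norm_le_zero_iff.1 this
  obtain ⟨i₀⟩ := ‹Nonempty ι›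
  have h1 : f (y i₀) < u₀ := hf1 _ (subset_convexHull ℝ _ (Set.mem_range_self i₀))
  rw [hf0] at h1 hf2
  simp at h1 hf2
  linarith

/-- Pointwise form of the main direction: near an interior point of a value of a convex-valued
lower semicontinuous multifunction, a whole ball is contained in interiors of nearby values. -/
lemma lsc_pointwise {X E : Type*} [TopologicalSpace X] [NormedAddCommGroup E]
    [NormedSpace ℝ E] [FiniteDimensional ℝ E]
    (F : X → Set E) (hconv : ∀ x, Convex ℝ (F x)) (hlsc : LowerSemicontinuousSetMap F)
    (x : X) (k : E) (hk : k ∈ interior (F x)) :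
    ∃ ρ > 0, ∃ N ∈ nhds x, ∀ w ∈ N, ball k ρ ⊆ interior (F w) := by
  have hnhds : interior (F x) ∈ nhds k := isOpen_interior.mem_nhds hk
  obtain ⟨b, hkb, hbs⟩ := exists_mem_interior_convexHull_affineBasis hnhds
  obtain ⟨r, hr, hball⟩ := Metric.isOpen_iff.1 isOpen_interior k hkb
  set ρ := r / 2 with hρdef
  have hρ : 0 < ρ := by positivity
  have hball' : ball k (2 * ρ) ⊆ convexHull ℝ (Set.range ⇑b) := by
    have : 2 * ρ = r := by rw [hρdef]; ring
    rw [this]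
    exact hball.trans interior_subset
  -- for each vertex, the lsc property gives a neighborhood of `x`
  have hFi : ∀ i, (F x ∩ ball (b i) (ρ / 2)).Nonempty := by
    intro i
    refine ⟨b i, ?_, mem_ball_self (by positivity)⟩
    exact interior_subset (hbs (subset_convexHull ℝ _ (Set.mem_range_self i)))
  have hN : ∀ i, {w : X | (F w ∩ ball (b i) (ρ / 2)).Nonempty} ∈ nhds x :=
    fun i => hlsc x _ isOpen_ball (hFi i)
  refine ⟨ρ, hρ, ⋂ i, {w : X | (F w ∩ ball (b i) (ρ / 2)).Nonempty},
    Filter.iInter_mem.2 hN, ?_⟩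
  intro w hw
  have hw' : ∀ i, (F w ∩ ball (b i) (ρ / 2)).Nonempty := by
    intro i
    exact Set.mem_iInter.1 hw i
  choose y hyF hyb using hw'
  have hy : ∀ i, ‖y i - b i‖ < ρ / 2 := by
    intro i
    rw [← dist_eq_norm]
    exact hyb i
  have hsub : ball k ρ ⊆ convexHull ℝ (Set.range y) :=
    hull_stability (⇑b) y k ρ hρ hball' hy
  have hsub2 : convexHull ℝ (Set.range y) ⊆ F w := by
    apply convexHull_min _ (hconv w)
    rintro _ ⟨i, rfl⟩
    exact hyF i
  exact interior_maximal (hsub.trans hsub2) isOpen_ball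

/-- A convex-valued lower semicontinuous multifunction locally contains any compact
subset of the interior of one of its values in the interiors of nearby values; the
converse holds for closed values with nonempty interior. -/
theorem lsc_convex_valued_maps
    {X E : Type*} [TopologicalSpace X] [NormedAddCommGroup E] [NormedSpace ℝ E]
    [FiniteDimensional ℝ E]
    (F : X → Set E) (hconv : ∀ x, Convex ℝ (F x)) :
    (LowerSemicontinuousSetMap F →
      ∀ x : X, ∀ K : Set E, IsCompact K → K ⊆ interior (F x) →
        ∃ N ∈ nhds x, ∀ w ∈ N, K ⊆ interior (F w)) ∧
    ((∀ x, IsClosed (F x)) → (∀ x, (interior (F x)).Nonempty) →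
      (∀ x : X, ∀ K : Set E, IsCompact K → K ⊆ interior (F x) →
        ∃ N ∈ nhds x, ∀ w ∈ N, K ⊆ interior (F w)) →
      LowerSemicontinuousSetMap F) := by
  constructor
  · -- main direction
    intro hlsc x K hK hKint
    have hpt : ∀ k ∈ K, ∃ ρ > 0, ∃ N ∈ nhds x, ∀ w ∈ N, ball k ρ ⊆ interior (F w) :=
      fun k hk => lsc_pointwise F hconv hlsc x k (hKint hk)
    choose! ρ hρ N hN hball using hpt
    have hcover : K ⊆ ⋃ k ∈ K, ball k (ρ k) := by
      intro k hk
      exact Set.mem_biUnion hk (mem_ball_self (hρ k hk))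
    obtain ⟨t, htK, htfin, htcover⟩ :=
      hK.elim_finite_subcover_image (fun k _ => isOpen_ball) hcover
    refine ⟨⋂ k ∈ t, N k, (Filter.biInter_mem htfin).2 (fun k hk => hN k (htK hk)), ?_⟩
    intro w hw u hu
    obtain ⟨k, hkt, hub⟩ := Set.mem_iUnion₂.1 (htcover hu)
    have hwN : w ∈ N k := by
      have := Set.mem_iInter₂.1 hw k hkt
      exact this
    exact hball k (htK hkt) w hwN hub
  · -- converse
    intro hclosed hint hprop x V hV ⟨y, hyF, hyV⟩
    obtain ⟨z, hz⟩ := hint x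
    obtain ⟨δ, hδ, hδV⟩ := Metric.isOpen_iff.1 hV y hyV
    -- pick a point on the segment from `y` to `z`, close to `y`, inside `interior (F x) ∩ V`
    set t : ℝ := min 1 (δ / (2 * (‖z - y‖ + 1))) with ht_def
    have hzy : (0:ℝ) < ‖z - y‖ + 1 := by positivity
    have ht0 : 0 < t := lt_min one_pos (by positivity)
    have ht1 : t ≤ 1 := min_le_left _ _
    set p : E := (1 - t) • y + t • z with hp_def
    have hpint : p ∈ interior (F x) :=
      (hconv x).combo_self_interior_mem_interior hyF hz (by linarith) ht0 (by ring)
    have hpV : p ∈ V := by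
      apply hδV
      rw [mem_ball, dist_eq_norm]
      have hpy : p - y = t • (z - y) := by rw [hp_def]; module
      rw [hpy, norm_smul, Real.norm_of_nonneg ht0.le]
      have h1 : t ≤ δ / (2 * (‖z - y‖ + 1)) := min_le_right _ _
      have h2 : t * ‖z - y‖ ≤ δ / (2 * (‖z - y‖ + 1)) * ‖z - y‖ :=
        mul_le_mul_of_nonneg_right h1 (norm_nonneg _)
      have h3 : δ / (2 * (‖z - y‖ + 1)) * ‖z - y‖ < δ := by
        rw [div_mul_eq_mul_div, div_lt_iff₀ (by positivity)]
        nlinarith [norm_nonneg (z - y)]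
      linarith
    obtain ⟨N, hNx, hNsub⟩ := hprop x {p} isCompact_singleton
      (Set.singleton_subset_iff.2 hpint)
    refine Filter.mem_of_superset hNx ?_
    intro w hw
    exact ⟨p, interior_subset (hNsub w hw rfl), hpV⟩
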